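/- Let R be a commutative ring, J an ideal, and ∂₁,...,∂ᵣ derivations of R whose R-span M ⊆ Der(R) is closed under the Lie bracket. Let f ∈ R have ord(f) ≥ n (i.e. ∂_I(f) ∈ J for every multi-index I of length < n). Then for any multi-index I of length n and any permutation J' of I, the difference ∂_{J'}(f) − ∂_I(f) lies in J. -/

import Mathlib

/-- Composition of derivations along a multi-index; the empty list gives the identity. -/
def compAlong {R : Type*} [CommRing R] {ι : Type*} (D : ι → Derivation ℤ R R)
    (I : List ι) (f : R) : R :=
  (I.map D).foldr (fun d x => d x) f

section Aux
variable {R : Type*} [CommRing R]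

/-- Apply a list of derivations (rightmost first). -/
def applyList (L : List (Derivation ℤ R R)) (f : R) : R :=
  L.foldr (fun d x => d x) f

@[simp] lemma applyList_nil (f : R) : applyList ([] : List (Derivation ℤ R R)) f = f := rfl

@[simp] lemma applyList_cons (d : Derivation ℤ R R) (L : List (Derivation ℤ R R)) (f : R) :
    applyList (d :: L) f = d (applyList L f) := rfl

lemma applyList_append (A B : List (Derivation ℤ R R)) (f : R) :
    applyList (A ++ B) f = applyList A (applyList B f) := by
  induction A with
  | nil => rfl
  | cons d A ih => simp [ih]

lemma applyList_sub (L : List (Derivation ℤ R R)) (a b : R) :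
    applyList L (a - b) = applyList L a - applyList L b := by
  induction L with
  | nil => rfl
  | cons d L ih => simp [ih, map_sub]

lemma compAlong_eq_applyList {ι : Type*} (D : ι → Derivation ℤ R R) (I : List ι) (f : R) :
    compAlong D I f = applyList (I.map D) f := rfl

variable {r : ℕ} (D : Fin r → Derivation ℤ R R) (f : R)

/-- Span of the values of compositions of length at most `k` applied to `f`. -/
def TT (k : ℕ) : Submodule R R :=
  Submodule.span R {g | ∃ I : List (Fin r), I.length ≤ k ∧ compAlong D I f = g}

lemma TT_mono {k : ℕ} : TT D f k ≤ TT D f (k + 1) :=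
  Submodule.span_mono (by rintro g ⟨I, hI, rfl⟩; exact ⟨I, hI.trans (Nat.le_succ _), rfl⟩)

lemma apply_TT_D (i : Fin r) {k : ℕ} {g : R} (hg : g ∈ TT D f k) :
    D i g ∈ TT D f (k + 1) := by
  induction hg using Submodule.span_induction with
  | mem g hg =>
    obtain ⟨I, hI, rfl⟩ := hg
    exact Submodule.subset_span ⟨i :: I, by simpa using hI, rfl⟩
  | zero => simp
  | add a b _ _ ha hb => rw [map_add]; exact add_mem ha hb
  | smul c g hg ih =>
    rw [smul_eq_mul, Derivation.leibniz]
    refine add_mem (Submodule.smul_mem _ _ ih) ?_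
    rw [smul_eq_mul, mul_comm, ← smul_eq_mul]
    exact Submodule.smul_mem _ _ (TT_mono D f hg)

lemma apply_TT {d : Derivation ℤ R R} (hd : d ∈ Submodule.span R (Set.range D))
    {k : ℕ} {g : R} (hg : g ∈ TT D f k) : d g ∈ TT D f (k + 1) := by
  induction hd using Submodule.span_induction with
  | mem d hd => obtain ⟨i, rfl⟩ := hd; exact apply_TT_D D f i hg
  | zero => simp
  | add a b _ _ ha hb => rw [Derivation.add_apply]; exact add_mem ha hb
  | smul c d _ ih => rw [Derivation.smul_apply]; exact Submodule.smul_mem _ _ ih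

lemma applyList_mem_TT (L : List (Derivation ℤ R R))
    (hL : ∀ d ∈ L, d ∈ Submodule.span R (Set.range D)) :
    applyList L f ∈ TT D f L.length := by
  induction L with
  | nil => exact Submodule.subset_span ⟨[], le_refl 0, rfl⟩
  | cons d L ih =>
    exact apply_TT D f (hL d List.mem_cons_self)
      (ih fun e he => hL e (List.mem_cons_of_mem _ he))

end Aux

/-- If the `R`-span of the `∂ᵢ` is closed under the Lie bracket and `∂_I(f) ∈ J` for all
multi-indices of length `< n`, then for any multi-index `I` of length `n` and any
permutation `J'` of `I`, one has `∂_{J'}(f) − ∂_I(f) ∈ J`. -/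
theorem stmt_6 {R : Type*} [CommRing R] (J : Ideal R) {r : ℕ}
    (D : Fin r → Derivation ℤ R R)
    (hLie : ∀ d ∈ Submodule.span R (Set.range D), ∀ e ∈ Submodule.span R (Set.range D),
      ⁅d, e⁆ ∈ Submodule.span R (Set.range D))
    (n : ℕ) (f : R)
    (hf : ∀ I : List (Fin r), I.length < n → compAlong D I f ∈ J) :
    ∀ I J' : List (Fin r), I.length = n → J'.Perm I →
      compAlong D J' f - compAlong D I f ∈ J := by
  have hTT : ∀ k : ℕ, k < n → TT D f k ≤ J := by
    intro k hk
    apply Submodule.span_le.mpr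
    rintro g ⟨I, hI, rfl⟩
    exact hf I (lt_of_le_of_lt hI hk)
  suffices H : ∀ (J' I : List (Fin r)), J'.Perm I → ∀ pre : List (Fin r),
      (pre ++ I).length = n → compAlong D (pre ++ J') f - compAlong D (pre ++ I) f ∈ J by
    intro I J' hI hperm
    simpa using H J' I hperm [] (by simpa using hI)
  intro J' I hperm
  induction hperm with
  | nil => intro pre _; simp
  | cons x p ih =>
    intro pre hlen
    have h := ih (pre ++ [x]) (by simpa using hlen)
    simpa [List.append_assoc] using h
  | swap x y l =>
    intro pre hlen
    have key : compAlong D (pre ++ y :: x :: l) f - compAlong D (pre ++ x :: y :: l) f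
        = applyList (pre.map D ++ ⁅D y, D x⁆ :: l.map D) f := by
      rw [compAlong_eq_applyList, compAlong_eq_applyList, applyList_append,
        List.map_append, List.map_append, applyList_append, applyList_append,
        ← applyList_sub]
      congr 1
    rw [key]
    have hlen' : (pre.map D ++ ⁅D y, D x⁆ :: l.map D).length < n := by
      simp only [List.length_append, List.length_cons, List.length_map] at hlen ⊢
      omega
    apply hTT _ hlen'
    apply applyList_mem_TT
    intro d hd
    rcases List.mem_append.mp hd with h | h
    · obtain ⟨i, _, rfl⟩ := List.mem_map.mp h
      exact Submodule.subset_span ⟨i, rfl⟩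
    · rcases List.mem_cons.mp h with h | h
      · subst h
        exact hLie _ (Submodule.subset_span ⟨y, rfl⟩) _ (Submodule.subset_span ⟨x, rfl⟩)
      · obtain ⟨i, _, rfl⟩ := List.mem_map.mp h
        exact Submodule.subset_span ⟨i, rfl⟩
  | trans p q ihp ihq =>
    intro pre hlen
    have h2 := ihq pre hlen
    have h1 := ihp pre (by
      simp only [List.length_append] at hlen ⊢
      rw [q.length_eq]; exact hlen)
    have := add_mem h1 h2
    simpa using this
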